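/- Let R be a Noetherian commutative ring over a field of characteristic zero and ∂ : R → R a derivation. If I ⊆ R is an ideal with ∂(I) ⊆ I, then the radical √I also satisfies ∂(√I) ⊆ √I. -/
import Mathlib

private lemma key_ind
    {k R : Type*} [Field k] [CharZero k] [CommRing R] [Algebra k R]
    (D : Derivation k R R) (I : Ideal R)
    (hI : ∀ x ∈ I, D x ∈ I) (x : R) (n : ℕ) (hx : x ^ n ∈ I) :
    ∀ j, j ≤ n → (n.descFactorial j : R) * (x ^ (n - j) * D x ^ (2 * j)) ∈ I := by
  intro j
  induction j with
  | zero => intro _; simpa using hx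
  | succ j ih =>
    intro hj
    have hj' : j ≤ n := Nat.le_of_succ_le hj
    have h1 := ih hj'
    have h2 := hI _ h1
    -- D of the element
    have hD : D ((n.descFactorial j : R) * (x ^ (n - j) * D x ^ (2 * j)))
        = (n.descFactorial j : R) *
          (x ^ (n - j) * ((2 * j) • (D x ^ (2 * j - 1) • D (D x)))
            + D x ^ (2 * j) * ((n - j) • (x ^ (n - j - 1) • D x))) := by
      rw [show ((n.descFactorial j : R) * (x ^ (n - j) * D x ^ (2 * j)))
            = (n.descFactorial j : ℕ) • (x ^ (n - j) * D x ^ (2 * j)) by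
          simp [nsmul_eq_mul]]
      rw [map_nsmul, Derivation.leibniz, Derivation.leibniz_pow, Derivation.leibniz_pow]
      simp [nsmul_eq_mul, smul_eq_mul]
      ring
    have h3 : D x * D ((n.descFactorial j : R) * (x ^ (n - j) * D x ^ (2 * j))) ∈ I :=
      I.mul_mem_left _ h2
    have h4 : (2 * j : R) * D (D x) *
        ((n.descFactorial j : R) * (x ^ (n - j) * D x ^ (2 * j))) ∈ I :=
      I.mul_mem_left _ h1
    have h5 := I.sub_mem h3 h4
    have key : (n.descFactorial (j+1) : R) * (x ^ (n - (j+1)) * D x ^ (2 * (j+1)))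
        = D x * D ((n.descFactorial j : R) * (x ^ (n - j) * D x ^ (2 * j)))
          - (2 * j : R) * D (D x) *
            ((n.descFactorial j : R) * (x ^ (n - j) * D x ^ (2 * j))) := by
      rw [hD]
      have hxa : x ^ (n - j) = x ^ (n - (j+1)) * x := by
        rw [← pow_succ]
        congr 1
        omega
      have hdx : D x * ((2 * j : ℕ) • (D x ^ (2 * j - 1) • D (D x)))
          = (2 * j : R) * (D x ^ (2 * j) * D (D x)) := by
        cases j with
        | zero => simp
        | succ m =>
          simp only [nsmul_eq_mul, smul_eq_mul, Nat.cast_mul]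
          rw [show 2 * (m+1) - 1 = 2 * m + 1 by omega,
              show 2 * (m+1) = (2 * m + 1) + 1 by omega]
          push_cast
          ring
      have hcoef : (n.descFactorial (j+1) : R) = (n - j : ℕ) * (n.descFactorial j : ℕ) := by
        rw [Nat.descFactorial_succ]
        push_cast
        ring
      have hb : n - j - 1 = n - (j+1) := by omega
      rw [hxa, hb, hcoef]
      simp only [nsmul_eq_mul, smul_eq_mul] at hdx ⊢
      push_cast at hdx ⊢
      linear_combination (-(n.descFactorial j : R) * (x ^ (n-(j+1)) * x)) * hdx
    rw [key]
    exact h5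

/-- Over a field of characteristic zero, a derivation of a Noetherian ring
preserving an ideal also preserves its radical. -/
theorem derivation_radical_invariant
    {k R : Type*} [Field k] [CharZero k] [CommRing R] [Algebra k R]
    [IsNoetherianRing R]
    (D : Derivation k R R) (I : Ideal R)
    (hI : ∀ x ∈ I, D x ∈ I) :
    ∀ x ∈ I.radical, D x ∈ I.radical := by
  intro x hx
  obtain ⟨n, hn⟩ := hx
  have h := key_ind D I hI x n hn n le_rfl
  simp only [Nat.sub_self, pow_zero, one_mul, Nat.descFactorial_self] at h
  -- n! is a unit in R
  have hu : IsUnit ((n.factorial : k)) := by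
    exact isUnit_iff_ne_zero.mpr (by exact_mod_cast Nat.factorial_ne_zero n)
  have hu' : IsUnit ((n.factorial : R)) := by
    have := hu.map (algebraMap k R)
    rwa [map_natCast] at this
  obtain ⟨u, hu2⟩ := hu'
  have : D x ^ (2 * n) ∈ I := by
    have := I.mul_mem_left (↑u⁻¹ : R) h
    rwa [← mul_assoc, ← hu2, Units.inv_mul, one_mul] at this
  exact ⟨2 * n, this⟩
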